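/- Let M be a real r × d matrix with λ_max(MM*) ≤ β' for some β' > 0, let c ∈ ℝ^r be in the range of M, let x ∈ ℝ^d, and let z be the orthogonal projection of x onto the nonempty affine subspace {y : My = c}. Suppose s ∈ ℝ^d satisfies ⟨x − z, s − z⟩ ≤ 0. Then ‖z − s‖² ≤ ‖x − s‖² − (1/β')·‖Mx − c‖². -/

import Mathlib

open scoped RealInnerProductSpace BigOperators

noncomputable section

open Matrix in
private lemma quad_le_aux {n : ℕ} {A : Matrix (Fin n) (Fin n) ℝ} (hA : A.IsHermitian) {β : ℝ}
    (h : ∀ i, hA.eigenvalues i ≤ β) (w : Fin n → ℝ) :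
    w ⬝ᵥ (A *ᵥ w) ≤ β * (w ⬝ᵥ w) := by
  set U : Matrix (Fin n) (Fin n) ℝ := (hA.eigenvectorUnitary : Matrix (Fin n) (Fin n) ℝ) with hU
  have hstar : star U = Uᵀ := by
    ext i j; simp [Matrix.star_apply]
  set v := (star U) *ᵥ w with hv
  have hUU : U * star U = 1 := (Matrix.mem_unitaryGroup_iff).mp hA.eigenvectorUnitary.2
  have hwU : w ᵥ* U = v := by rw [hv, hstar, mulVec_transpose]
  have h1 : w ⬝ᵥ (A *ᵥ w) = v ⬝ᵥ (diagonal hA.eigenvalues *ᵥ v) := by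
    conv_lhs => rw [hA.spectral_theorem, Unitary.conjStarAlgAut_apply]
    rw [← mulVec_mulVec, ← mulVec_mulVec, dotProduct_mulVec, hwU, ← hv]
    norm_num [Function.comp]
  have hUUT : U * Uᵀ = 1 := hstar ▸ hUU
  have h2 : w ⬝ᵥ w = v ⬝ᵥ v := by
    conv_rhs => rw [hv, dotProduct_mulVec, hstar, vecMul_transpose, mulVec_mulVec, hUUT, one_mulVec]
  rw [h1, h2]
  simp only [dotProduct, mulVec_diagonal, Finset.mul_sum]
  apply Finset.sum_le_sum
  intro i _
  have : hA.eigenvalues i * (v i * v i) ≤ β * (v i * v i) :=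
    mul_le_mul_of_nonneg_right (h i) (mul_self_nonneg _)
  nlinarith [this]

open Matrix in
private lemma mulVec_sq_le {r d : ℕ} (M : Matrix (Fin r) (Fin d) ℝ) {β : ℝ} (hβ : 0 < β)
    (hpav : ∀ i : Fin r, (Matrix.isHermitian_mul_conjTranspose_self M).eigenvalues i ≤ β)
    (v : Fin d → ℝ) : (M *ᵥ v) ⬝ᵥ (M *ᵥ v) ≤ β * (v ⬝ᵥ v) := by
  set w := M *ᵥ v with hw
  set u := Mᵀ *ᵥ w with hu
  have key : w ⬝ᵥ ((M * Mᴴ) *ᵥ w) ≤ β * (w ⬝ᵥ w) :=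
    quad_le_aux (Matrix.isHermitian_mul_conjTranspose_self M) hpav w
  have hMH : Mᴴ = Mᵀ := by ext i j; simp
  have hquad : w ⬝ᵥ ((M * Mᴴ) *ᵥ w) = u ⬝ᵥ u := by
    rw [hMH, ← mulVec_mulVec, dotProduct_mulVec, ← mulVec_transpose]
  have huu : u ⬝ᵥ u ≤ β * (w ⬝ᵥ w) := hquad ▸ key
  -- w ⬝ᵥ w = v ⬝ᵥ u
  have hvw : w ⬝ᵥ w = v ⬝ᵥ u := by
    rw [hw, dotProduct_mulVec, ← mulVec_transpose, dotProduct_comm, ← hw, ← hu]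
  -- Cauchy-Schwarz: (v ⬝ᵥ u)^2 ≤ (v⬝ᵥv)(u⬝ᵥu)
  have hcs : (v ⬝ᵥ u) ^ 2 ≤ (v ⬝ᵥ v) * (u ⬝ᵥ u) := by
    simpa [dotProduct, pow_two] using
      Finset.sum_mul_sq_le_sq_mul_sq Finset.univ v u
  have hww : 0 ≤ w ⬝ᵥ w := Finset.sum_nonneg fun i _ => mul_self_nonneg _
  have hvv : 0 ≤ v ⬝ᵥ v := Finset.sum_nonneg fun i _ => mul_self_nonneg _
  have h3 : (w ⬝ᵥ w) ^ 2 ≤ (v ⬝ᵥ v) * (β * (w ⬝ᵥ w)) := by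
    calc (w ⬝ᵥ w) ^ 2 = (v ⬝ᵥ u) ^ 2 := by rw [hvw]
    _ ≤ (v ⬝ᵥ v) * (u ⬝ᵥ u) := hcs
    _ ≤ (v ⬝ᵥ v) * (β * (w ⬝ᵥ w)) := mul_le_mul_of_nonneg_left huu hvv
  rcases eq_or_lt_of_le hww with h0 | h0
  · nlinarith [h0, hvv, hβ]
  · nlinarith [h3, h0]

/-- **Lemma (progress of an obtuse block projection).**
Let `M` be a real `r × d` matrix with `λ_max(M M*) ≤ β'` for some `β' > 0` (all eigenvalues
of the Hermitian positive semidefinite matrix `M Mᴴ` are at most `β'`), let `c` be in the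
range of `M`, and let `z` be the orthogonal projection (nearest point) of `x` onto the
nonempty affine subspace `{y : M y = c}`.  If `s` satisfies the obtuse-angle condition
`⟪x − z, s − z⟫ ≤ 0`, then `‖z − s‖² ≤ ‖x − s‖² − (1/β') ‖M x − c‖²`. -/
theorem obtuse_block_projection_progress
    {r d : ℕ} (M : Matrix (Fin r) (Fin d) ℝ) (β' : ℝ) (hβ' : 0 < β')
    -- λ_max(M M*) ≤ β'
    (hpav : ∀ i : Fin r, (Matrix.isHermitian_mul_conjTranspose_self M).eigenvalues i ≤ β')
    (c : Fin r → ℝ)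
    -- c is in the range of M, so {y : M y = c} is a nonempty affine subspace
    (hc : ∃ y : EuclideanSpace ℝ (Fin d), M.mulVec y = c)
    (x z : EuclideanSpace ℝ (Fin d))
    -- z is the orthogonal projection of x onto {y : M y = c}:
    (hzmem : M.mulVec z = c)
    (hznear : ∀ y : EuclideanSpace ℝ (Fin d), M.mulVec y = c → ‖x - z‖ ≤ ‖x - y‖)
    (s : EuclideanSpace ℝ (Fin d))
    -- the obtuse-angle condition
    (hobtuse : ⟪x - z, s - z⟫ ≤ 0) :
    ‖z - s‖ ^ 2 ≤ ‖x - s‖ ^ 2 - (1 / β') * ∑ i, (M.mulVec x i - c i) ^ 2 := by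
  set v : Fin d → ℝ := fun i => x i - z i with hvdef
  have hMv : M.mulVec v = fun i => M.mulVec x i - c i := by
    funext i
    rw [← hzmem]
    simp [Matrix.mulVec, dotProduct, hvdef, mul_sub, Finset.sum_sub_distrib]
  have hsum : ∑ i, (M.mulVec x i - c i) ^ 2 = dotProduct (M.mulVec v) (M.mulVec v) := by
    rw [hMv]; simp [dotProduct, pow_two]
  have hbound : dotProduct (M.mulVec v) (M.mulVec v) ≤ β' * (dotProduct v v) :=
    mulVec_sq_le M hβ' hpav v
  have hxz : ⟪x - z, x - z⟫ = dotProduct v v := by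
    rw [PiLp.inner_apply]
    simp [PiLp.inner_apply, RCLike.inner_apply, dotProduct, hvdef, pow_two]
  have hnorm : ‖x - z‖ ^ 2 = dotProduct v v := by
    rw [← hxz, real_inner_self_eq_norm_sq]
  have hdist : (1 / β') * ∑ i, (M.mulVec x i - c i) ^ 2 ≤ ‖x - z‖ ^ 2 := by
    rw [hsum, hnorm, div_mul_eq_mul_div, one_mul, div_le_iff₀ hβ']
    linarith [hbound]
  have hpyth : ‖x - s‖ ^ 2 = ‖x - z‖ ^ 2 + 2 * ⟪x - z, z - s⟫ + ‖z - s‖ ^ 2 := by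
    have h := norm_add_sq_real (x - z) (z - s)
    rw [show (x - z) + (z - s) = x - s by abel] at h
    linarith [h]
  have hinner : (0:ℝ) ≤ ⟪x - z, z - s⟫ := by
    have : ⟪x - z, z - s⟫ = -⟪x - z, s - z⟫ := by
      rw [show z - s = -(s - z) by abel, inner_neg_right]
    linarith [this, hobtuse]
  linarith [hdist, hpyth, hinner]
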